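/- Let f : ℝ → ℝ defined by f(ψ) = 1 − (1/4)·(1/6 + (1/2)(cos²ψ − sin²ψ)²). Then f attains its maximum value 23/24 at ψ = π/4, and consequently the bound ⟨θ⟩² ≤ 3·max_ψ f(ψ) = 23/8 is strictly between the Bishop-Gromov value 3 and the true squared growth rate 2 for ℍ²×ℍ². -/
import Mathlib

theorem H2H2_bound_evaluation
    (f : ℝ → ℝ)
    (hf : ∀ ψ, f ψ = 1 - (1 / 4) * (1 / 6 + (1 / 2) * (Real.cos ψ ^ 2 - Real.sin ψ ^ 2) ^ 2)) :
    f (Real.pi / 4) = 23 / 24 ∧ (∀ ψ, f ψ ≤ 23 / 24) ∧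
    (3 : ℝ) * (23 / 24) = 23 / 8 ∧ (2 : ℝ) < 23 / 8 ∧ (23 : ℝ) / 8 < 3 := by
  refine ⟨?_, ?_, by norm_num, by norm_num, by norm_num⟩
  · rw [hf, Real.cos_pi_div_four, Real.sin_pi_div_four]
    norm_num
  · intro ψ
    rw [hf]
    nlinarith [sq_nonneg (Real.cos ψ ^ 2 - Real.sin ψ ^ 2)]
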